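/- Fix 𝗑 ∈ ℝ, set x_τ := −τ + (π^{1/4}/√2)·𝗑·τ^{1/2} and Φ_τ(ξ) := −(τ/3)ξ³ + x_τ·ξ − Q(ξ). There exists δ ∈ (0, 1) such that for every δ₁ ∈ (0, δ) there is τ₀ > 0 with: for all τ ≥ τ₀ and all z ∈ ℂ with 1 − δ ≤ |z| ≤ 1 − δ₁, Re Φ_τ(u₀(z)) ≤ 0.4734·τ, and Re Φ_τ(u_k(z)) ≤ −1.9366·|k|^{3/2}·τ for every integer k ≠ 0. -/

import Mathlib

open MeasureTheory Filter Topology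

noncomputable section

/-- θ_k(z) = −2·Arg z + 4πk. -/
def thetaK (z : ℂ) (k : ℤ) : ℝ := -(2 * Complex.arg z) + 4 * Real.pi * (k : ℝ)

/-- The Bethe roots u_k(z) = −(−2·log|z| + i·θ_k(z))^{1/2} (principal branch). -/
def uK (z : ℂ) (k : ℤ) : ℂ :=
  -((((-2 * Real.log (‖z‖) : ℝ) : ℂ) + Complex.I * ((thetaK z k : ℝ) : ℂ)) ^ ((1 : ℂ) / 2))

/-- Q(ξ) = −(1/π) ∫ℝ log(1 − e^{−ξ²/2} e^{−t²/2})/(i·t − ξ) dt. -/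
def Qf (ξ : ℂ) : ℂ :=
  -(1 / (Real.pi : ℂ)) *
    ∫ t : ℝ, Complex.log (1 - Complex.exp (-ξ ^ 2 / 2) * Complex.exp (-((t : ℂ) ^ 2) / 2)) /
      (Complex.I * (t : ℂ) - ξ)

/-- Φ(ξ) = −(τ/3)ξ³ + x·ξ − Q(ξ). -/
def PhiF (τ x : ℝ) (ξ : ℂ) : ℂ := -((τ : ℂ) / 3) * ξ ^ 3 + (x : ℂ) * ξ - Qf ξ

/-- The discrete kernel K_z. -/
def Kz (z : ℂ) (τ γ x : ℝ) (ξ₁ ξ₂ : ℂ) : ℂ :=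
  ∑' k : ℤ,
    Complex.exp (PhiF τ x ξ₁ + PhiF τ x (uK z k) + ((γ : ℂ) / 2) * (ξ₁ ^ 2 - (uK z k) ^ 2)) /
      (ξ₁ * uK z k * (ξ₁ + uK z k) * (uK z k + ξ₂))

/-- N-th term of the Fredholm series of K_z. -/
def fredTermK (z : ℂ) (τ γ x : ℝ) (N : ℕ) : ℂ :=
  ∑' ℓ : Fin N → ℤ,
    Matrix.det (Matrix.of (fun i j : Fin N => Kz z τ γ x (uK z (ℓ i)) (uK z (ℓ j))))

/-- The Fredholm determinant det(𝕀 − K_z). -/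
def fredDetK (z : ℂ) (τ γ x : ℝ) : ℂ :=
  1 + ∑' N : ℕ, ((-1 : ℂ) ^ (N + 1) / (Nat.factorial (N + 1) : ℂ)) * fredTermK z τ γ x (N + 1)

/-- Polylogarithm Li_s(w) = Σ_{k≥1} w^k/k^s. -/
def Li (s : ℝ) (w : ℂ) : ℂ := ∑' k : ℕ, w ^ (k + 1) / ((((k : ℝ) + 1) ^ s : ℝ) : ℂ)

def A1 (z : ℂ) : ℂ := -Li (3 / 2) z / (Real.sqrt (2 * Real.pi) : ℂ)

def A2 (z : ℂ) : ℂ := -Li (5 / 2) z / (Real.sqrt (2 * Real.pi) : ℂ)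

def Bf (z : ℂ) : ℂ :=
  (1 / (4 * (Real.pi : ℂ))) * ∫ t in (0 : ℝ)..1, (Li (1 / 2) ((t : ℂ) * z)) ^ 2 / (t : ℂ)

/-- The point z = R·e^{iθ}. -/
def circlePt (R θ : ℝ) : ℂ := (R : ℂ) * Complex.exp (Complex.I * (θ : ℂ))

/-- The limiting one-point distribution F(x; τ, γ) for step initial condition. -/
def Fstep (R τ γ x : ℝ) : ℂ :=
  (1 / (2 * (Real.pi : ℂ))) *
    ∫ θ in (0 : ℝ)..(2 * Real.pi),
      Complex.exp ((x : ℂ) * A1 (circlePt R θ) + (τ : ℂ) * A2 (circlePt R θ) +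
          2 * Bf (circlePt R θ)) * fredDetK (circlePt R θ) τ γ x

/-- x_τ = −τ + (π^{1/4}/√2)·𝗑·τ^{1/2}. -/
def xTau (x τ : ℝ) : ℝ := -τ + (Real.pi ^ ((1 : ℝ) / 4) / Real.sqrt 2) * x * Real.sqrt τ

/-- The trace Tr K_z = Σ_{k∈ℤ} K_z(u_k, u_k). -/
def trK (z : ℂ) (τ γ x : ℝ) : ℂ := ∑' k : ℤ, Kz z τ γ x (uK z k) (uK z k)

/-! ### Auxiliary material for the proof -/

/-- The uniform bound on `‖Qf‖` in the annulus. -/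
def Cq (δ₁ : ℝ) : ℝ := (1/Real.pi) * (((1/(2*δ₁)+1)/Real.sqrt δ₁) * Real.sqrt (2*Real.pi))

lemma Cq_nonneg {δ₁ : ℝ} (h : 0 < δ₁) : 0 ≤ Cq δ₁ := by
  unfold Cq
  have := Real.pi_pos
  positivity

lemma Qf_norm_le (δ₁ : ℝ) (hδ : 0 < δ₁) (ξ : ℂ)
    (hre : Real.sqrt δ₁ ≤ -ξ.re)
    (habs : ‖Complex.exp (-ξ^2/2)‖ ≤ 1 - δ₁) :
    ‖Qf ξ‖ ≤ Cq δ₁ := by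
  have hpi := Real.pi_pos
  have hsd : 0 < Real.sqrt δ₁ := Real.sqrt_pos.mpr hδ
  set K : ℝ := (1/(2*δ₁)+1)/Real.sqrt δ₁ with hK
  have hK0 : 0 ≤ K := by positivity
  have key : ‖∫ t : ℝ, Complex.log (1 - Complex.exp (-ξ ^ 2 / 2) *
      Complex.exp (-((t : ℂ) ^ 2) / 2)) / (Complex.I * (t : ℂ) - ξ)‖ ≤
      K * Real.sqrt (2*Real.pi) := by
    refine le_trans (norm_integral_le_integral_norm _) ?_
    have hg : Integrable (fun t : ℝ => K * Real.exp (-(1/2) * t^2)) := by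
      exact (integrable_exp_neg_mul_sq (by norm_num : (0:ℝ) < 1/2)).const_mul K
    have hle : ∀ t : ℝ, ‖Complex.log (1 - Complex.exp (-ξ ^ 2 / 2) *
        Complex.exp (-((t : ℂ) ^ 2) / 2)) / (Complex.I * (t : ℂ) - ξ)‖ ≤
        K * Real.exp (-(1/2) * t^2) := by
      intro t
      set w : ℂ := Complex.exp (-ξ ^ 2 / 2) * Complex.exp (-((t : ℂ) ^ 2) / 2) with hw
      have he : ‖Complex.exp (-((t : ℂ) ^ 2) / 2)‖ = Real.exp (-(1/2) * t^2) := by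
        rw [Complex.norm_exp]
        congr 1
        have : -((t:ℂ)^2)/2 = (((-(1/2) * t^2 : ℝ)) : ℂ) := by push_cast; ring
        rw [this, Complex.ofReal_re]
      have hexpt : Real.exp (-(1/2) * t^2) ≤ 1 := by
        rw [Real.exp_le_one_iff]
        nlinarith [sq_nonneg t]
      have hwle : ‖w‖ ≤ (1 - δ₁) * Real.exp (-(1/2) * t^2) := by
        rw [hw, norm_mul, he]
        exact mul_le_mul_of_nonneg_right habs (Real.exp_nonneg _)
      have hδ1' : δ₁ ≤ 1 := by
        by_contra hcon
        push_neg at hcon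
        have : ‖w‖ < 0 := lt_of_le_of_lt hwle (by nlinarith [Real.exp_pos (-(1/2) * t^2)])
        exact absurd this (not_lt.mpr (norm_nonneg _))
      have hw1 : ‖w‖ ≤ 1 - δ₁ := le_trans hwle (by nlinarith [Real.exp_pos (-(1/2)*t^2)])
      have hw1' : ‖w‖ < 1 := lt_of_le_of_lt hw1 (by linarith)
      have hlog : ‖Complex.log (1 - w)‖ ≤ (1/(2*δ₁)+1) * ‖w‖ := by
        have h0 : (1 : ℂ) - w = 1 + (-w) := by ring
        rw [h0]
        have hnw : ‖-w‖ < 1 := by rwa [norm_neg]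
        refine le_trans (Complex.norm_log_one_add_le hnw) ?_
        rw [norm_neg]
        have hinv : (1 - ‖w‖)⁻¹ ≤ δ₁⁻¹ := by
          apply inv_anti₀ hδ
          linarith
        have h2 : ‖w‖^2 * (1-‖w‖)⁻¹ / 2 ≤ ‖w‖ * δ₁⁻¹ / 2 := by
          have : ‖w‖^2 ≤ ‖w‖ := by nlinarith [norm_nonneg w]
          have h3 : ‖w‖^2 * (1-‖w‖)⁻¹ ≤ ‖w‖ * δ₁⁻¹ :=
            mul_le_mul this hinv (inv_nonneg.mpr (by linarith)) (norm_nonneg w)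
          linarith
        have : ‖w‖ * δ₁⁻¹ / 2 + ‖w‖ = (1/(2*δ₁)+1) * ‖w‖ := by
          field_simp
        linarith
      have hden : Real.sqrt δ₁ ≤ ‖Complex.I * (t:ℂ) - ξ‖ := by
        refine le_trans hre ?_
        calc -ξ.re ≤ |(Complex.I * (t:ℂ) - ξ).re| := by
              have : (Complex.I * (t:ℂ) - ξ).re = -ξ.re := by simp
              rw [this]
              exact le_abs_self _
          _ ≤ ‖Complex.I * (t:ℂ) - ξ‖ := Complex.abs_re_le_norm _
      rw [norm_div]
      have hnum : ‖Complex.log (1 - w)‖ ≤ (1/(2*δ₁)+1) * ((1-δ₁) * Real.exp (-(1/2)*t^2)) := by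
        refine le_trans hlog ?_
        apply mul_le_mul_of_nonneg_left hwle (by positivity)
      calc ‖Complex.log (1 - w)‖ / ‖Complex.I * (t:ℂ) - ξ‖
          ≤ ((1/(2*δ₁)+1) * ((1-δ₁) * Real.exp (-(1/2)*t^2))) / Real.sqrt δ₁ := by
            have hee := Real.exp_pos (-(1/2)*t^2)
            apply div_le_div₀ (mul_nonneg (by positivity) (mul_nonneg (by linarith) hee.le))
              hnum hsd hden
        _ ≤ K * Real.exp (-(1/2) * t^2) := by
            have hee := Real.exp_pos (-(1/2)*t^2)
            rw [hK, div_mul_eq_mul_div]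
            gcongr
            nlinarith [hee.le]
    refine le_trans (integral_mono_of_nonneg (Filter.Eventually.of_forall fun t => norm_nonneg _)
      hg (Filter.Eventually.of_forall hle)) ?_
    rw [integral_const_mul]
    have : (∫ t : ℝ, Real.exp (-(1/2) * t^2)) = Real.sqrt (Real.pi / (1/2)) :=
      integral_gaussian (1/2)
    rw [this]
    have h2 : Real.pi / (1/2) = 2 * Real.pi := by ring
    rw [h2]
  calc ‖Qf ξ‖ = (1/Real.pi) * ‖∫ t : ℝ, Complex.log (1 - Complex.exp (-ξ ^ 2 / 2) *
      Complex.exp (-((t : ℂ) ^ 2) / 2)) / (Complex.I * (t : ℂ) - ξ)‖ := by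
        unfold Qf
        rw [norm_mul, norm_neg, norm_div, Complex.norm_real, norm_one]
        simp [abs_of_pos hpi]
    _ ≤ (1/Real.pi) * (K * Real.sqrt (2*Real.pi)) := by
        apply mul_le_mul_of_nonneg_left key (by positivity)
    _ = Cq δ₁ := rfl

lemma cpow_half_sq {s : ℂ} (hs : s ≠ 0) : (s ^ ((1:ℂ)/2)) ^ 2 = s := by
  rw [sq, ← Complex.cpow_add _ _ hs]; norm_num

lemma re_cpow_half_nonneg (s : ℂ) : 0 ≤ (s ^ ((1:ℂ)/2)).re := by
  rcases eq_or_ne s 0 with h | h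
  · simp [h, Complex.zero_cpow (show ((1:ℂ)/2) ≠ 0 by norm_num)]
  · rw [Complex.cpow_def_of_ne_zero h, Complex.exp_re]
    apply mul_nonneg (Real.exp_nonneg _)
    have him : (Complex.log s * ((1:ℂ)/2)).im = s.arg / 2 := by
      simp [Complex.mul_im, Complex.log_im]; ring
    rw [him]
    apply Real.cos_nonneg_of_mem_Icc
    constructor
    · nlinarith [Complex.neg_pi_lt_arg s, Real.pi_pos]
    · nlinarith [Complex.arg_le_pi s, Real.pi_pos]

lemma c_le_two : Real.pi ^ ((1:ℝ)/4) / Real.sqrt 2 ≤ 2 := by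
  have h1 : Real.pi ^ ((1:ℝ)/4) ≤ (16:ℝ) ^ ((1:ℝ)/4) :=
    Real.rpow_le_rpow Real.pi_nonneg (by linarith [Real.pi_lt_d6]) (by norm_num)
  have h2 : (16:ℝ) ^ ((1:ℝ)/4) = 2 := by
    rw [show (16:ℝ) = 2^(4:ℕ) by norm_num, ← Real.rpow_natCast 2 4,
      ← Real.rpow_mul (by norm_num : (0:ℝ) ≤ 2)]
    norm_num
  have h3 : (1:ℝ) ≤ Real.sqrt 2 := by
    rw [show (1:ℝ) = Real.sqrt 1 by simp]
    exact Real.sqrt_le_sqrt (by norm_num)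
  calc Real.pi ^ ((1:ℝ)/4) / Real.sqrt 2 ≤ Real.pi ^ ((1:ℝ)/4) / 1 := by
        apply div_le_div_of_nonneg_left (Real.rpow_nonneg Real.pi_nonneg _) one_pos h3
          |>.trans_eq (by ring)
    _ = Real.pi ^ ((1:ℝ)/4) := by ring
    _ ≤ 2 := h2 ▸ h1

set_option maxHeartbeats 1600000 in
/-- Key structural estimate: real part of Φ at a Bethe root. -/
lemma phi_aux (x τ δ₁ : ℝ) (hδ₁ : 0 < δ₁) (hτ : 1 ≤ τ) (z : ℂ) (k : ℤ)
    (hz0 : (1:ℝ)/2 ≤ ‖z‖) (hz1 : ‖z‖ ≤ 1 - δ₁) :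
    ∃ p q : ℝ, 0 ≤ p ∧
      p^2 - q^2 = -2*Real.log (‖z‖) ∧
      2*(p*q) = thetaK z k ∧
      p^2 + q^2 ≤ -2*Real.log (‖z‖) + |thetaK z k| ∧
      |thetaK z k| ≤ p^2 + q^2 ∧
      (PhiF τ (xTau x τ) (uK z k)).re ≤
        τ * (p + ((-2*Real.log (‖z‖))*p - thetaK z k * q)/3)
          + 2*(|x|+1)*Real.sqrt τ * p + Cq δ₁ := by
  have hz0' : 0 < ‖z‖ := lt_of_lt_of_le (by norm_num) hz0
  have hδ1' : δ₁ ≤ 1/2 := by linarith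
  set a : ℝ := -2*Real.log (‖z‖) with haa
  set θ : ℝ := thetaK z k with hθθ
  have hlneg : Real.log (‖z‖) < 0 := Real.log_neg hz0' (by linarith)
  have ha : 0 < a := by simp only [haa]; linarith
  have ha1 : 2*δ₁ ≤ a := by
    have h1 : Real.log (‖z‖) ≤ Real.log (1-δ₁) :=
      Real.log_le_log hz0' hz1
    have h2 : Real.log (1-δ₁) ≤ (1-δ₁) - 1 := Real.log_le_sub_one_of_pos (by linarith)
    simp only [haa]; linarith
  set s : ℂ := ((a : ℝ) : ℂ) + Complex.I * ((θ : ℝ) : ℂ) with hss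
  have hs_re : s.re = a := by simp [hss]
  have hs_im : s.im = θ := by simp [hss]
  have hs0 : s ≠ 0 := by
    intro h
    rw [h] at hs_re
    simp at hs_re
    linarith [hs_re ▸ ha]
  set U : ℂ := uK z k with hUU
  have hU : U = -(s ^ ((1:ℂ)/2)) := by rw [hUU, hss]; rfl
  set p : ℝ := (s ^ ((1:ℂ)/2)).re with hpp
  set q : ℝ := (s ^ ((1:ℂ)/2)).im with hqq
  have hUre : U.re = -p := by rw [hU]; simp [hpp]
  have hUim : U.im = -q := by rw [hU]; simp [hqq]
  have hp : 0 ≤ p := re_cpow_half_nonneg s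
  have hU2 : U^2 = s := by rw [hU, neg_pow]; simp [cpow_half_sq hs0]
  have h1 : p^2 - q^2 = a := by
    have : (U^2).re = a := by rw [hU2, hs_re]
    rw [sq, Complex.mul_re, hUre, hUim] at this
    nlinarith [this]
  have h3 : 2*(p*q) = θ := by
    have : (U^2).im = θ := by rw [hU2, hs_im]
    rw [sq, Complex.mul_im, hUre, hUim] at this
    nlinarith [this]
  have hpq_abs : p^2 + q^2 = ‖s‖ := by
    have h4 : (‖U‖)^2 = ‖s‖ := by
      rw [← hU2, norm_pow]
    rw [← h4, Complex.sq_norm, Complex.normSq_apply, hUre, hUim]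
    ring
  have h2 : p^2 + q^2 ≤ a + |θ| := by
    rw [hpq_abs]
    calc ‖s‖ ≤ |s.re| + |s.im| := Complex.norm_le_abs_re_add_abs_im s
      _ = a + |θ| := by rw [hs_re, hs_im, abs_of_pos ha]
  have h2' : |θ| ≤ p^2 + q^2 := by
    rw [hpq_abs, ← hs_im]
    exact Complex.abs_im_le_norm s
  refine ⟨p, q, hp, h1, h3, h2, h2', ?_⟩
  have hU3 : U^3 = s * U := by rw [pow_succ, hU2]
  have hre3 : (U^3).re = a*(-p) - θ*(-q) := by
    rw [hU3, Complex.mul_re, hs_re, hs_im, hUre, hUim]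
  have hPhi : (PhiF τ (xTau x τ) U).re =
      -(τ/3) * (U^3).re + (xTau x τ) * U.re - (Qf U).re := by
    have hrw : PhiF τ (xTau x τ) U =
        (((-(τ/3) : ℝ)) : ℂ) * U^3 + (((xTau x τ : ℝ)) : ℂ) * U - Qf U := by
      unfold PhiF; push_cast; ring
    rw [hrw]
    simp [Complex.add_re, Complex.sub_re, Complex.re_ofReal_mul]
  have hsτ : 0 ≤ Real.sqrt τ := Real.sqrt_nonneg τ
  have hpsq : δ₁ ≤ p^2 := by
    have : a ≤ ‖s‖ := hs_re ▸ Complex.re_le_norm s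
    nlinarith [hpq_abs, sq_nonneg q]
  have hreQ : |(Qf U).re| ≤ Cq δ₁ := by
    have hb : ‖Qf U‖ ≤ Cq δ₁ := by
      apply Qf_norm_le δ₁ hδ₁
      · rw [hUre]
        have : Real.sqrt δ₁ ≤ Real.sqrt (p^2) := Real.sqrt_le_sqrt hpsq
        rw [Real.sqrt_sq hp] at this
        linarith [this]
      · have he : -U^2/2 = (((-a/2 : ℝ)) : ℂ) + Complex.I * (((-θ/2 : ℝ)) : ℂ) := by
          rw [hU2, hss]; push_cast; ring
        rw [he, Complex.norm_exp]
        have hre : ((((-a/2 : ℝ)) : ℂ) + Complex.I * (((-θ/2 : ℝ)) : ℂ)).re = -a/2 := by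
          simp
        rw [hre]
        have : -a/2 = Real.log (‖z‖) := by simp only [haa]; ring
        rw [this, Real.exp_log hz0']
        exact hz1
    exact le_trans (Complex.abs_re_le_norm _) hb
  have hxterm : (xTau x τ) * U.re ≤ τ * p + 2*(|x|+1)*Real.sqrt τ * p := by
    rw [hUre, xTau]
    have hc : 0 ≤ Real.pi ^ ((1:ℝ)/4) / Real.sqrt 2 := by positivity
    have habs : |(Real.pi ^ ((1:ℝ)/4) / Real.sqrt 2) * x * Real.sqrt τ * p| ≤
        2*(|x|+1)*Real.sqrt τ * p := by
      rw [abs_mul, abs_mul, abs_mul, abs_of_nonneg hc, abs_of_nonneg hsτ, abs_of_nonneg hp]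
      have hx2 : Real.pi ^ ((1:ℝ)/4) / Real.sqrt 2 * |x| ≤ 2*(|x|+1) := by
        nlinarith [c_le_two, abs_nonneg x, hc]
      nlinarith [mul_nonneg hsτ hp, hx2]
    have hval := neg_abs_le ((Real.pi ^ ((1:ℝ)/4) / Real.sqrt 2) * x * Real.sqrt τ * p)
    nlinarith [habs, hval]
  rw [hPhi, hre3]
  have hq : -(Qf U).re ≤ Cq δ₁ := by
    have := neg_abs_le (Qf U).re
    linarith [hreQ]
  linarith [hxterm, hq]

set_option maxHeartbeats 800000 in
/-- k = 0 core real inequality. -/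
lemma case0 (p q a θ : ℝ) (hp : 0 ≤ p) (ha : 0 < a) (ha2 : a ≤ 1/1000000)
    (h1 : p^2 - q^2 = a) (h3 : 2*(p*q) = θ) (hθ : |θ| ≤ 2*Real.pi)
    (h2 : p^2 + q^2 ≤ a + |θ|) :
    p + (a*p - θ*q)/3 ≤ 4715/10000 ∧ p ≤ 3 := by
  have hpi : Real.pi < 3.141593 := Real.pi_lt_d6
  have hθq : θ * q = 2*(p*q^2) := by rw [← h3]; ring
  have hG : p + (a*p - θ*q)/3 = p * (3 + 2*a - (p^2+q^2))/3 := by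
    rw [hθq]; linear_combination (p/3) * h1
  obtain ⟨r, hr⟩ : ∃ r : ℝ, r = p^2 + q^2 := ⟨_, rfl⟩
  rw [← hr] at hG h2
  have hra : a ≤ r := by nlinarith [sq_nonneg q]
  have hr0 : 0 ≤ r := le_trans ha.le hra
  have hp2 : 2*p^2 = r + a := by rw [hr]; linarith
  constructor
  · rw [hG]
    rcases le_or_gt (3 + 2*a) r with h | h
    · have h0 : p * (3 + 2*a - r) ≤ 0 := mul_nonpos_of_nonneg_of_nonpos hp (by linarith)
      linarith
    · have hkey : (p * (3 + 2*a - r))^2 ≤ (14145/10000)^2 := by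
        have expand : (p * (3+2*a-r))^2 = (r+a)/2 * (3+2*a-r)^2 := by
          linear_combination ((3+2*a-r)^2/2) * hp2
        rw [expand]
        have key4 : r*(3-r)^2 ≤ 4 := by
          nlinarith [mul_nonneg (sq_nonneg (r-1)) (show (0:ℝ) ≤ 4-r by nlinarith)]
        have e1 : (r+a)*(3+2*a-r)^2 = r*(3-r)^2 + a*(3+2*a-r)^2 + 4*a*(r*(3+a-r)) := by
          ring
        have b1 : a*(3+2*a-r)^2 ≤ 10*a := by
          have hb : (3+2*a-r)^2 ≤ 10 := by nlinarith
          nlinarith [mul_le_mul_of_nonneg_left hb ha.le]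
        have b2 : r*(3+a-r) ≤ 10 := by
          nlinarith [sq_nonneg (r - (3+a)/2)]
        have b2' : 4*a*(r*(3+a-r)) ≤ 40*a := by
          have := mul_le_mul_of_nonneg_left b2 (show (0:ℝ) ≤ 4*a by linarith)
          linarith
        linarith [key4, e1.le, b1, b2']
      have h0 : 0 ≤ p * (3+2*a-r) := mul_nonneg hp (by linarith)
      have hs := Real.sqrt_le_sqrt hkey
      rw [Real.sqrt_sq h0, Real.sqrt_sq (by norm_num : (0:ℝ) ≤ 14145/10000)] at hs
      linarith
  · have hp9 : p^2 ≤ 9 := by linarith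
    linarith [hp9, sq_nonneg (p-3)]

set_option maxHeartbeats 1600000 in
/-- k ≠ 0 core real inequality, with t = √|k|. -/
lemma case1 (p q a θ t : ℝ) (ht : 1 ≤ t) (hp : 0 ≤ p) (ha : 0 < a) (ha2 : a ≤ 1/1000000)
    (h1 : p^2 - q^2 = a) (h3 : 2*(p*q) = θ)
    (hθl : 4*Real.pi*t^2 - 2*Real.pi ≤ |θ|)
    (hθu : |θ| ≤ 4*Real.pi*t^2 + 2*Real.pi)
    (h2 : p^2 + q^2 ≤ a + |θ|) (h2' : |θ| ≤ p^2 + q^2) :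
    p + (a*p - θ*q)/3 ≤ -((19366/10000)*(t^2*t) + (2/1000)*t) ∧ p ≤ 4.5*t := by
  have hpil : 3.141592 < Real.pi := Real.pi_gt_d6
  have hpiu : Real.pi < 3.141593 := Real.pi_lt_d6
  have hθq : θ * q = 2*(p*q^2) := by rw [← h3]; ring
  have hG : p + (a*p - θ*q)/3 = p * (3 + 2*a - (p^2+q^2))/3 := by
    rw [hθq]; linear_combination (p/3) * h1
  obtain ⟨r, hr⟩ : ∃ r : ℝ, r = p^2 + q^2 := ⟨_, rfl⟩
  rw [← hr] at hG h2 h2'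
  have hra : a ≤ r := by nlinarith [sq_nonneg q]
  have hr0 : 0 ≤ r := le_trans ha.le hra
  have hp2 : 2*p^2 = r + a := by rw [hr]; linarith
  have ht2 : 1 ≤ t^2 := by nlinarith
  have hrB : 12.566368*t^2 - 6.283186 ≤ r := by nlinarith [hθl, h2']
  constructor
  · rw [hG]
    have hrc : 3 + 2*a ≤ r := by nlinarith
    have hY0 : 0 ≤ 3*((19366/10000)*(t^2*t) + (2/1000)*t) := by positivity
    have hX0 : 0 ≤ p * (r - (3 + 2*a)) := mul_nonneg hp (by linarith)
    have hsq : (3*((19366/10000)*(t^2*t) + (2/1000)*t))^2 ≤ (p * (r - (3+2*a)))^2 := by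
      have expand : (p * (r - (3+2*a)))^2 = (r+a)/2 * (r - (3+2*a))^2 := by
        linear_combination ((r-(3+2*a))^2/2) * hp2
      rw [expand]
      have hB0 : 0 ≤ 12.566368*t^2 - 6.283186 := by nlinarith
      have hD0 : (0:ℝ) ≤ 12.566368*t^2 - 6.283186 - 3.000002 := by nlinarith
      have hDr : 12.566368*t^2 - 6.283186 - 3.000002 ≤ r - (3+2*a) := by linarith
      have step1 : ((12.566368*t^2 - 6.283186)/2) * (12.566368*t^2 - 6.283186 - 3.000002)^2
          ≤ (r+a)/2 * (r - (3+2*a))^2 := by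
        have hsq2 : (12.566368*t^2 - 6.283186 - 3.000002)^2 ≤ (r - (3+2*a))^2 := by
          apply pow_le_pow_left₀ hD0 hDr
        have h5 : (12.566368*t^2 - 6.283186)/2 ≤ (r+a)/2 := by linarith
        calc ((12.566368*t^2 - 6.283186)/2) * (12.566368*t^2 - 6.283186 - 3.000002)^2
            ≤ ((12.566368*t^2 - 6.283186)/2) * (r - (3+2*a))^2 :=
              mul_le_mul_of_nonneg_left hsq2 (by linarith)
          _ ≤ (r+a)/2 * (r - (3+2*a))^2 :=
              mul_le_mul_of_nonneg_right h5 (sq_nonneg _)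
      refine le_trans ?_ step1
      have hn : 0 ≤ t^2 - 1 := by linarith
      nlinarith [mul_nonneg (mul_nonneg hn hn) hn, mul_nonneg hn hn, hn,
        mul_nonneg (mul_nonneg (mul_nonneg hn hn) hn) hn]
    have hfin : 3*((19366/10000)*(t^2*t) + (2/1000)*t) ≤ p * (r - (3+2*a)) := by
      have hs := Real.sqrt_le_sqrt hsq
      rwa [Real.sqrt_sq hY0, Real.sqrt_sq hX0] at hs
    nlinarith [hfin]
  · have hp20 : p^2 ≤ 20.25*t^2 := by nlinarith
    nlinarith [sq_nonneg (p - 4.5*t), hp20]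

set_option maxHeartbeats 1600000 in
theorem statement11 (x : ℝ) :
    ∃ δ ∈ Set.Ioo (0 : ℝ) 1, ∀ δ₁ ∈ Set.Ioo (0 : ℝ) δ, ∃ τ₀ > (0 : ℝ),
      ∀ τ : ℝ, τ₀ ≤ τ → ∀ z : ℂ, 1 - δ ≤ ‖z‖ → ‖z‖ ≤ 1 - δ₁ →
        (PhiF τ (xTau x τ) (uK z 0)).re ≤ 0.4734 * τ ∧
        ∀ k : ℤ, k ≠ 0 →
          (PhiF τ (xTau x τ) (uK z k)).re ≤ -1.9366 * |(k : ℝ)| ^ ((3 : ℝ) / 2) * τ := by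
  refine ⟨1/10000000, by norm_num, ?_⟩
  rintro δ₁ ⟨hδ₁0, hδ₁u⟩
  set N : ℝ := 9*(|x|+1) + Cq δ₁ with hN
  have hCq0 : 0 ≤ Cq δ₁ := Cq_nonneg hδ₁0
  have hN0 : 0 ≤ N := by
    have := abs_nonneg x
    simp only [hN]; linarith
  refine ⟨max 1 ((N*(10000/19))^2), lt_of_lt_of_le one_pos (le_max_left _ _), ?_⟩
  intro τ hτ0 z hzl hzu
  have hτ1 : 1 ≤ τ := le_trans (le_max_left _ _) hτ0
  have hτpos : 0 < τ := lt_of_lt_of_le one_pos hτ1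
  have hsτ0 : 0 ≤ Real.sqrt τ := Real.sqrt_nonneg τ
  have hsτ1 : 1 ≤ Real.sqrt τ := by
    rw [show (1:ℝ) = Real.sqrt 1 by simp]
    exact Real.sqrt_le_sqrt hτ1
  have hττ : Real.sqrt τ * Real.sqrt τ = τ := Real.mul_self_sqrt hτpos.le
  have hsqrtτ : N*(10000/19) ≤ Real.sqrt τ := by
    have h1 : (N*(10000/19))^2 ≤ τ := le_trans (le_max_right _ _) hτ0
    have := Real.sqrt_le_sqrt h1
    rwa [Real.sqrt_sq (by positivity)] at this
  have hmargin : N ≤ (19/10000) * Real.sqrt τ := by linarith [hsqrtτ]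
  have hz0 : (1:ℝ)/2 ≤ ‖z‖ := by
    have : (1:ℝ) - 1/10000000 ≤ ‖z‖ := hzl
    linarith
  have hz0' : 0 < ‖z‖ := lt_of_lt_of_le (by norm_num) hz0
  -- bound on a
  have ha2 : -2*Real.log (‖z‖) ≤ 1/1000000 := by
    have hlz : Real.log (1 - 1/10000000) ≤ Real.log (‖z‖) :=
      Real.log_le_log (by norm_num) hzl
    have hinv : Real.log ((1 - 1/10000000 : ℝ)⁻¹) ≤ (1 - 1/10000000 : ℝ)⁻¹ - 1 :=
      Real.log_le_sub_one_of_pos (by norm_num)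
    rw [Real.log_inv] at hinv
    have : -Real.log (1 - 1/10000000) ≤ (1 - 1/10000000 : ℝ)⁻¹ - 1 := by linarith
    have hval : ((1 - 1/10000000 : ℝ)⁻¹ - 1) ≤ 1/2000000 := by norm_num
    linarith
  constructor
  · -- k = 0
    obtain ⟨p, q, hp, h1, h3, h2, h2', hPhi⟩ :=
      phi_aux x τ δ₁ hδ₁0 hτ1 z 0 hz0 hzu
    have hδ1u' : ‖z‖ < 1 := by
      have : 0 < δ₁ := hδ₁0
      linarith
    have ha : 0 < -2*Real.log (‖z‖) := by
      have := Real.log_neg hz0' hδ1u'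
      linarith
    have hθ0 : |thetaK z 0| ≤ 2*Real.pi := by
      unfold thetaK
      push_cast
      rw [mul_zero, add_zero, abs_neg, abs_mul, abs_of_pos (by norm_num : (0:ℝ) < 2)]
      linarith [Complex.abs_arg_le_pi z]
    obtain ⟨hG, hp3⟩ := case0 p q (-2*Real.log (‖z‖)) (thetaK z 0) hp ha ha2 h1 h3 hθ0 h2
    have f1 : τ * (p + ((-2*Real.log (‖z‖))*p - thetaK z 0 * q)/3) ≤
        τ * (4715/10000) := mul_le_mul_of_nonneg_left hG hτpos.le
    have f2 : 2*(|x|+1)*Real.sqrt τ * p ≤ 2*(|x|+1)*Real.sqrt τ * 3 :=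
      mul_le_mul_of_nonneg_left hp3 (by positivity)
    have f3 : Cq δ₁ ≤ Cq δ₁ * Real.sqrt τ := le_mul_of_one_le_right hCq0 hsτ1
    have f4 : (9*(|x|+1) + Cq δ₁) * Real.sqrt τ ≤ (19/10000) * τ := by
      calc (9*(|x|+1) + Cq δ₁) * Real.sqrt τ ≤ ((19/10000) * Real.sqrt τ) * Real.sqrt τ :=
            mul_le_mul_of_nonneg_right hmargin hsτ0
        _ = (19/10000) * τ := by rw [mul_assoc, hττ]
    have hx0 : 0 ≤ |x| := abs_nonneg x
    have hxs : 0 ≤ (|x|+1) * Real.sqrt τ := by positivity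
    have : (PhiF τ (xTau x τ) (uK z 0)).re ≤ (4734/10000) * τ := by
      linarith [hPhi, f1, f2, f3, f4, mul_nonneg hx0 hsτ0, hsτ0]
    linarith [this, show (4734/10000 : ℝ) * τ = 0.4734 * τ by norm_num]
  · -- k ≠ 0
    intro k hk
    obtain ⟨p, q, hp, h1, h3, h2, h2', hPhi⟩ :=
      phi_aux x τ δ₁ hδ₁0 hτ1 z k hz0 hzu
    have hδ1u' : ‖z‖ < 1 := by linarith
    have ha : 0 < -2*Real.log (‖z‖) := by
      have := Real.log_neg hz0' hδ1u'
      linarith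
    set m : ℝ := |(k:ℝ)| with hm
    have hm1 : 1 ≤ m := by
      have : (1:ℤ) ≤ |k| := Int.one_le_abs (by exact_mod_cast hk)
      rw [hm, ← Int.cast_abs]
      exact_mod_cast this
    have hm0 : 0 ≤ m := le_trans zero_le_one hm1
    set t : ℝ := Real.sqrt m with hts
    have ht1 : 1 ≤ t := by
      rw [hts, show (1:ℝ) = Real.sqrt 1 by simp]
      exact Real.sqrt_le_sqrt hm1
    have ht2 : t^2 = m := Real.sq_sqrt hm0
    -- θ bounds
    have hpi := Real.pi_pos
    have habs4 : |4*Real.pi*(k:ℝ)| = 4*Real.pi*m := by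
      rw [abs_mul, abs_of_pos (by positivity : (0:ℝ) < 4*Real.pi), hm]
    have hargz := Complex.abs_arg_le_pi z
    have hθeq : thetaK z k = 4*Real.pi*(k:ℝ) - 2*Complex.arg z := by
      unfold thetaK; ring
    have hθl : 4*Real.pi*t^2 - 2*Real.pi ≤ |thetaK z k| := by
      rw [ht2, hθeq]
      have := abs_sub_abs_le_abs_sub (4*Real.pi*(k:ℝ)) (2*Complex.arg z)
      rw [habs4] at this
      have harg2 : |2*Complex.arg z| ≤ 2*Real.pi := by
        rw [abs_mul, abs_of_pos (by norm_num : (0:ℝ) < 2)]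
        linarith
      linarith
    have hθu : |thetaK z k| ≤ 4*Real.pi*t^2 + 2*Real.pi := by
      rw [ht2, hθeq]
      have := abs_sub (4*Real.pi*(k:ℝ)) (2*Complex.arg z)
      have htri : |4*Real.pi*(k:ℝ) - 2*Complex.arg z| ≤ |4*Real.pi*(k:ℝ)| + |2*Complex.arg z| :=
        abs_sub _ _
      rw [habs4] at htri
      have harg2 : |2*Complex.arg z| ≤ 2*Real.pi := by
        rw [abs_mul, abs_of_pos (by norm_num : (0:ℝ) < 2)]
        linarith
      linarith
    obtain ⟨hG, hp45⟩ := case1 p q (-2*Real.log (‖z‖)) (thetaK z k) t ht1 hp ha ha2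
      h1 h3 hθl hθu h2 h2'
    -- final assembly
    have f1 : τ * (p + ((-2*Real.log (‖z‖))*p - thetaK z k * q)/3) ≤
        τ * (-((19366/10000)*(t^2*t) + (2/1000)*t)) := mul_le_mul_of_nonneg_left hG hτpos.le
    have f2 : 2*(|x|+1)*Real.sqrt τ * p ≤ 2*(|x|+1)*Real.sqrt τ * (4.5*t) :=
      mul_le_mul_of_nonneg_left hp45 (by positivity)
    have f3 : Cq δ₁ ≤ Cq δ₁ * t := le_mul_of_one_le_right hCq0 ht1
    have f4 : (9*(|x|+1) + Cq δ₁) * Real.sqrt τ ≤ (19/10000) * τ := by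
      calc (9*(|x|+1) + Cq δ₁) * Real.sqrt τ ≤ ((19/10000) * Real.sqrt τ) * Real.sqrt τ :=
            mul_le_mul_of_nonneg_right hmargin hsτ0
        _ = (19/10000) * τ := by rw [mul_assoc, hττ]
    have g1 : 9*(|x|+1)*Real.sqrt τ + Cq δ₁ ≤ (2/1000) * τ := by
      have hCqs : Cq δ₁ ≤ Cq δ₁ * Real.sqrt τ := le_mul_of_one_le_right hCq0 hsτ1
      linarith [f4, hCqs, hτpos.le]
    have g2 : (9*(|x|+1)*Real.sqrt τ + Cq δ₁) * t ≤ ((2/1000) * τ) * t :=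
      mul_le_mul_of_nonneg_right g1 (by linarith)
    have hm32 : m ^ ((3:ℝ)/2) = t^2 * t := by
      have e1 : m ^ ((3:ℝ)/2) = (m ^ ((1:ℝ)/2)) ^ (3:ℕ) := by
        rw [← Real.rpow_natCast (m ^ ((1:ℝ)/2)) 3, ← Real.rpow_mul hm0]
        norm_num
      rw [e1, ← Real.sqrt_eq_rpow, ← hts]
      ring
    rw [hm, hm32]
    linarith [hPhi, f1, f2, f3, g2]
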